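/- Let G be a compactly generated locally compact group with compact abelianization and K a compact symmetric generating identity neighborhood. Then there exists α = α(G) > 0 such that for any unitary representation of G on a Hilbert space V and any vector v ∈ V: if k₀ ∈ K attains sup_{k∈K} ‖(1 − k)v‖, then sup_{k∈K} ‖(1 − k)(1 − k₀)v‖ ≥ α ‖(1 − k₀)v‖. -/

import Mathlib

open scoped InnerProductSpace

section Aux
variable {G : Type*} [Group G]
  {V : Type} [NormedAddCommGroup V] [InnerProductSpace ℂ V]
  (π : G →* (V ≃ₗᵢ[ℂ] V))

lemma cocycle (v : V) (a b : G) :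
    v - π (a * b) v = (v - π a v) + π a (v - π b v) := by
  simp [map_mul, LinearIsometryEquiv.map_sub]

lemma adj_inner (u w : V) (a : G) :
    ⟪u, π a w⟫_ℂ = ⟪π a⁻¹ u, w⟫_ℂ := by
  conv_rhs => rw [← LinearIsometryEquiv.inner_map_map (π a)]
  congr 1
  have : π a (π a⁻¹ u) = (π a * π a⁻¹) u := rfl
  rw [this, ← map_mul, mul_inv_cancel, map_one]
  rfl

lemma word_bound (w : V) (K : Set G) (β : ℝ)
    (hb : ∀ k ∈ K, ‖w - π k w‖ ≤ β) :
    ∀ L : List G, (∀ x ∈ L, x ∈ K) → ‖w - π L.prod w‖ ≤ L.length * β := by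
  intro L
  induction L with
  | nil => simp
  | cons x L ih =>
    intro hmem
    rw [List.prod_cons, cocycle π w x L.prod]
    calc ‖(w - π x w) + π x (w - π L.prod w)‖
        ≤ ‖w - π x w‖ + ‖π x (w - π L.prod w)‖ := norm_add_le _ _
      _ = ‖w - π x w‖ + ‖w - π L.prod w‖ := by rw [LinearIsometryEquiv.norm_map]
      _ ≤ β + L.length * β := by
          gcongr
          · exact hb x (hmem x (by simp))
          · exact ih (fun y hy => hmem y (by simp [hy]))
    simp only [List.length_cons]
    push_cast
    ring_nf
    linarith

variable (v : V) (k₀ : G)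

/-- The approximate character. -/
noncomputable def phi (g : G) : ℂ :=
  ⟪v - π k₀ v, v - π g v⟫_ℂ / ((‖v - π k₀ v‖ : ℂ))^2

lemma cpos {α : ℝ}
    (h : ‖(v - π k₀ v) - π k₀ (v - π k₀ v)‖ < α * ‖v - π k₀ v‖) :
    0 < ‖v - π k₀ v‖ := by
  by_contra hc
  have h0 : ‖v - π k₀ v‖ = 0 := le_antisymm (not_lt.mp hc) (norm_nonneg _)
  rw [h0, mul_zero] at h
  exact absurd h (not_lt.mpr (norm_nonneg _))

lemma phi_one : phi π v k₀ 1 = 0 := by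
  simp [phi]

lemma phi_k0 (hc : 0 < ‖v - π k₀ v‖) : phi π v k₀ k₀ = 1 := by
  have h : ((‖v - π k₀ v‖ : ℝ) : ℂ) ≠ 0 := Complex.ofReal_ne_zero.mpr hc.ne'
  rw [phi, inner_self_eq_norm_sq_to_K]
  push_cast
  exact div_self (pow_ne_zero 2 h)

lemma phi_bound (hc : 0 < ‖v - π k₀ v‖) (K : Set G)
    (hmax : ∀ k ∈ K, ‖v - π k v‖ ≤ ‖v - π k₀ v‖)
    (L : List G) (hL : ∀ x ∈ L, x ∈ K) :
    ‖phi π v k₀ L.prod‖ ≤ L.length := by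
  have hb := word_bound π v K _ hmax L hL
  rw [phi]
  rw [norm_div]
  have hin := norm_inner_le_norm (𝕜 := ℂ) (v - π k₀ v) (v - π L.prod v)
  have h2 : ‖((‖v - π k₀ v‖ : ℂ))^2‖ = ‖v - π k₀ v‖^2 := by
    rw [norm_pow, Complex.norm_real, Real.norm_of_nonneg (norm_nonneg _)]
  rw [h2]
  rw [div_le_iff₀ (by positivity)]
  calc ‖⟪v - π k₀ v, v - π L.prod v⟫_ℂ‖ ≤ ‖v - π k₀ v‖ * ‖v - π L.prod v‖ := hin
    _ ≤ ‖v - π k₀ v‖ * (L.length * ‖v - π k₀ v‖) := by gcongr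
    _ = L.length * ‖v - π k₀ v‖^2 := by ring

lemma phi_defect (hc : 0 < ‖v - π k₀ v‖) (a b : G) :
    ‖phi π v k₀ (a * b) - phi π v k₀ a - phi π v k₀ b‖ ≤
      ‖(v - π k₀ v) - π a⁻¹ (v - π k₀ v)‖ * ‖v - π b v‖ / ‖v - π k₀ v‖^2 := by
  have key : phi π v k₀ (a * b) - phi π v k₀ a - phi π v k₀ b
      = ⟪π a⁻¹ (v - π k₀ v) - (v - π k₀ v), v - π b v⟫_ℂ
        / ((‖v - π k₀ v‖ : ℂ))^2 := by
    simp only [phi, cocycle π v a b, inner_add_right, adj_inner,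
      LinearIsometryEquiv.map_sub, inner_sub_left, inner_sub_right]
    ring
  set u := v - π k₀ v with hu
  rw [key, norm_div]
  have h2 : ‖((‖u‖ : ℂ))^2‖ = ‖u‖^2 := by
    rw [norm_pow, Complex.norm_real, Real.norm_of_nonneg (norm_nonneg _)]
  rw [h2]
  gcongr
  calc ‖⟪π a⁻¹ u - u, v - π b v⟫_ℂ‖ ≤ ‖π a⁻¹ u - u‖ * ‖v - π b v‖ :=
        norm_inner_le_norm _ _
    _ = ‖u - π a⁻¹ u‖ * ‖v - π b v‖ := by rw [norm_sub_rev]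

lemma phi_defect' (hc : 0 < ‖v - π k₀ v‖) (K : Set G)
    (hmax : ∀ k ∈ K, ‖v - π k v‖ ≤ ‖v - π k₀ v‖) (α : ℝ) (hα : 0 ≤ α)
    (hsmall : ∀ k ∈ K,
      ‖(v - π k₀ v) - π k (v - π k₀ v)‖ ≤ α * ‖v - π k₀ v‖)
    (a b : G) (La Lb : List G) (hLa : ∀ x ∈ La, x ∈ K) (hLb : ∀ x ∈ Lb, x ∈ K)
    (hpa : La.prod = a⁻¹) (hpb : Lb.prod = b) :
    ‖phi π v k₀ (a * b) - phi π v k₀ a - phi π v k₀ b‖ ≤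
      (La.length * α) * Lb.length := by
  set u := v - π k₀ v with hu
  have hub : ‖u - π a⁻¹ u‖ ≤ La.length * (α * ‖u‖) := by
    rw [← hpa]; exact word_bound π u K _ hsmall La hLa
  have hvb : ‖v - π b v‖ ≤ Lb.length * ‖u‖ := by
    rw [← hpb]; exact word_bound π v K _ hmax Lb hLb
  calc ‖phi π v k₀ (a * b) - phi π v k₀ a - phi π v k₀ b‖
      ≤ ‖u - π a⁻¹ u‖ * ‖v - π b v‖ / ‖u‖^2 := phi_defect π v k₀ hc a b
    _ ≤ (La.length * (α * ‖u‖)) * (Lb.length * ‖u‖) / ‖u‖^2 := by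
        apply div_le_div_of_nonneg_right ?_ (by positivity)
        exact mul_le_mul hub hvb (norm_nonneg _) (by positivity)
    _ = (La.length * α) * Lb.length * (‖u‖^2 / ‖u‖^2) := by ring
    _ = (La.length * α) * Lb.length := by rw [div_self (by positivity), mul_one]

end Aux

lemma exists_word {G : Type*} [Group G] (K : Set G) (hKsymm : K⁻¹ = K)
    (hKgen : Subgroup.closure K = ⊤) (g : G) :
    ∃ L : List G, (∀ x ∈ L, x ∈ K) ∧ L.prod = g := by
  have hg : g ∈ Subgroup.closure K := by rw [hKgen]; trivial
  have hg2 : g ∈ Submonoid.closure (K ∪ K⁻¹) := by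
    rw [← Subgroup.closure_toSubmonoid]; exact hg
  rw [hKsymm, Set.union_self] at hg2
  exact Submonoid.exists_list_of_mem_closure hg2

open scoped Classical in
noncomputable def ulim (F : Ultrafilter ℕ) (z : ℕ → ℂ) : ℂ :=
  if h : ∃ c, Filter.Tendsto z (F : Filter ℕ) (nhds c) then h.choose else 0

open scoped Classical in
lemma tendsto_ulim {F : Ultrafilter ℕ} {z : ℕ → ℂ}
    (h : ∃ c, Filter.Tendsto z (F : Filter ℕ) (nhds c)) :
    Filter.Tendsto z (F : Filter ℕ) (nhds (ulim F z)) := by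
  rw [ulim, dif_pos h]; exact h.choose_spec

lemma exists_lim_of_bounded (F : Ultrafilter ℕ) (z : ℕ → ℂ) (M : ℝ)
    (h : ∀ n, ‖z n‖ ≤ M) :
    ∃ c, Filter.Tendsto z (F : Filter ℕ) (nhds c) := by
  have hle : ↑(Ultrafilter.map z F) ≤ Filter.principal (Metric.closedBall (0:ℂ) M) := by
    rw [Ultrafilter.coe_map, Filter.le_principal_iff, Filter.mem_map]
    exact Filter.univ_mem' fun n => by
      simpa [Metric.mem_closedBall, dist_eq_norm] using h n
  have hcomp : IsCompact (Metric.closedBall (0:ℂ) M) := isCompact_closedBall 0 M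
  obtain ⟨x, -, hx⟩ := hcomp.ultrafilter_le_nhds (Ultrafilter.map z F) hle
  exact ⟨x, by rwa [Ultrafilter.coe_map] at hx⟩

/-- For a compactly generated locally compact group `G` with compact abelianization and
a compact symmetric generating identity neighborhood `K`, there exists `α > 0` such that
in any (continuous) unitary representation of `G`, if `k₀ ∈ K` attains
`sup_{k∈K} ‖(1−k)v‖`, then `sup_{k∈K} ‖(1−k)(1−k₀)v‖ ≥ α‖(1−k₀)v‖`. -/
theorem exists_alpha_differentiation
    {G : Type*} [Group G] [TopologicalSpace G] [IsTopologicalGroup G] [LocallyCompactSpace G]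
    (habel : ∀ φ : G → ℂ, Continuous φ → (∀ a b : G, φ (a * b) = φ a + φ b) →
      φ = fun _ => 0)
    (K : Set G) (hK : IsCompact K) (hKsymm : K⁻¹ = K) (hKnhds : K ∈ nhds (1 : G))
    (hKgen : Subgroup.closure K = ⊤) :
    ∃ α > (0 : ℝ),
      ∀ (V : Type) (_ : NormedAddCommGroup V) (_ : InnerProductSpace ℂ V)
        (_ : CompleteSpace V) (π : G →* (V ≃ₗᵢ[ℂ] V)),
        (∀ w : V, Continuous fun g : G => π g w) →
        ∀ (v : V) (k₀ : G), k₀ ∈ K →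
          (∀ k ∈ K, ‖v - π k v‖ ≤ ‖v - π k₀ v‖) →
          ∃ k ∈ K, α * ‖v - π k₀ v‖ ≤ ‖(v - π k₀ v) - π k (v - π k₀ v)‖ := by
  by_contra hcon
  push_neg at hcon
  have h' := fun n : ℕ => hcon (1/(n+1)) (by positivity)
  choose V iN iI iC π hcont v k₀ hk₀K hmax hsmall using h'
  have h1K : (1:G) ∈ K := mem_of_mem_nhds hKnhds
  have hcpos := fun n => cpos (π n) (v n) (k₀ n) (hsmall n (k₀ n) (hk₀K n))
  have hsmall' := fun n => fun k hk => le_of_lt (hsmall n k hk)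
  -- words
  choose Lw hLwK hLwprod using exists_word K hKsymm hKgen
  -- ultrafilter
  let F : Ultrafilter ℕ := Ultrafilter.of Filter.atTop
  have hF : (F : Filter ℕ) ≤ Filter.atTop := Ultrafilter.of_le _
  have hα : Filter.Tendsto (fun n : ℕ => 1/((n:ℝ)+1)) (F : Filter ℕ) (nhds 0) :=
    tendsto_one_div_add_atTop_nhds_zero_nat.mono_left hF
  -- the approximate characters
  set Φ : ℕ → G → ℂ := fun n g => phi (π n) (v n) (k₀ n) g with hΦdef
  have hΦb : ∀ (g : G) (n : ℕ), ‖Φ n g‖ ≤ (Lw g).length := by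
    intro g n
    have := phi_bound (π n) (v n) (k₀ n) (hcpos n) K (hmax n) (Lw g) (hLwK g)
    rw [hLwprod g] at this
    exact this
  have hlim : ∀ g : G, ∃ c, Filter.Tendsto (fun n => Φ n g) (F : Filter ℕ) (nhds c) :=
    fun g => exists_lim_of_bounded F _ _ (hΦb g)
  set φ : G → ℂ := fun g => ulim F (fun n => Φ n g) with hφdef
  have hφ : ∀ g, Filter.Tendsto (fun n => Φ n g) (F : Filter ℕ) (nhds (φ g)) :=
    fun g => tendsto_ulim (hlim g)
  -- additivity
  have hadd : ∀ a b : G, φ (a*b) = φ a + φ b := by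
    intro a b
    have hdef : ∀ n, ‖Φ n (a*b) - Φ n a - Φ n b‖ ≤
        ((Lw a⁻¹).length * (1/((n:ℝ)+1))) * (Lw b).length := by
      intro n
      exact phi_defect' (π n) (v n) (k₀ n) (hcpos n) K (hmax n) _ (by positivity)
        (hsmall' n) a b (Lw a⁻¹) (Lw b) (hLwK _) (hLwK _) (hLwprod _) (hLwprod _)
    have hE : Filter.Tendsto (fun n => Φ n (a*b) - Φ n a - Φ n b)
        (F : Filter ℕ) (nhds 0) := by
      apply squeeze_zero_norm hdef
      have := (hα.const_mul ((Lw a⁻¹).length : ℝ)).mul_const ((Lw b).length : ℝ)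
      simpa using this
    have h2 : Filter.Tendsto (fun n => Φ n (a*b)) (F : Filter ℕ)
        (nhds ((φ a + φ b) + 0)) := by
      have h3 := ((hφ a).add (hφ b)).add hE
      exact h3.congr (fun n => by ring)
    have := tendsto_nhds_unique (hφ (a*b)) h2
    rwa [add_zero] at this
  -- φ 1 = 0
  have hone : φ 1 = 0 := by
    have := hadd 1 1
    rw [one_mul] at this
    exact (left_eq_add.mp this)
  -- powers
  have hpow : ∀ (g : G) (m : ℕ), φ (g^m) = (m:ℂ) * φ g := by
    intro g m
    induction m with
    | zero => simpa using hone
    | succ m ih => rw [pow_succ, hadd, ih]; push_cast; ring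
  -- bounded by 1 on K
  have hΦK : ∀ n, ∀ k ∈ K, ‖Φ n k‖ ≤ 1 := by
    intro n k hk
    have := phi_bound (π n) (v n) (k₀ n) (hcpos n) K (hmax n) [k]
      (by intro x hx; rw [List.mem_singleton] at hx; rwa [hx])
    simpa using this
  have hφK : ∀ k ∈ K, ‖φ k‖ ≤ 1 := by
    intro k hk
    exact le_of_tendsto (hφ k).norm (Filter.Eventually.of_forall (fun n => hΦK n k hk))
  -- continuity at 1
  have hcont1 : Filter.Tendsto φ (nhds (1:G)) (nhds (0:ℂ)) := by
    rw [NormedAddCommGroup.tendsto_nhds_zero]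
    intro ε hε
    obtain ⟨m, hm⟩ := exists_nat_one_div_lt hε
    have hU : (fun g : G => g ^ (m+1)) ⁻¹' K ∈ nhds (1:G) := by
      apply ((continuous_pow (m+1)).continuousAt (x := (1:G))).preimage_mem_nhds
      rw [one_pow]; exact hKnhds
    filter_upwards [hU] with g hg
    have h1 : ‖φ (g^(m+1))‖ ≤ 1 := hφK _ hg
    rw [hpow, norm_mul, Complex.norm_natCast] at h1
    have hMpos : (0:ℝ) < (m:ℝ)+1 := by positivity
    have hcast : ((m+1:ℕ):ℝ) = (m:ℝ)+1 := by push_cast; ring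
    rw [hcast] at h1
    have h2 : ‖φ g‖ ≤ 1/((m:ℝ)+1) := by
      rw [le_div_iff₀ hMpos]
      nlinarith [norm_nonneg (φ g)]
    calc ‖φ g‖ ≤ 1/((m:ℝ)+1) := h2
      _ < ε := hm
  -- continuity
  have hφcont : Continuous φ := by
    rw [continuous_iff_continuousAt]
    intro g
    have key : ∀ x : G, φ x = φ g + φ (g⁻¹ * x) := by
      intro x
      rw [← hadd, mul_inv_cancel_left]
    have h2 : Filter.Tendsto (fun x : G => g⁻¹ * x) (nhds g) (nhds 1) := by
      have : Filter.Tendsto (fun x : G => g⁻¹ * x) (nhds g) (nhds (g⁻¹ * g)) :=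
        Filter.Tendsto.const_mul _ Filter.tendsto_id
      rwa [inv_mul_cancel] at this
    have h3 : Filter.Tendsto (fun x : G => φ g + φ (g⁻¹ * x)) (nhds g)
        (nhds (φ g + 0)) := Filter.Tendsto.const_add _ (hcont1.comp h2)
    rw [add_zero] at h3
    exact (h3.congr (fun x => (key x).symm))
  have hzero := habel φ hφcont hadd
  -- limit of k₀ in K
  have hk0P : ↑(Ultrafilter.map k₀ F) ≤ Filter.principal K := by
    rw [Ultrafilter.coe_map, Filter.le_principal_iff, Filter.mem_map]
    exact Filter.univ_mem' hk₀K
  obtain ⟨kst, hkstK, hkstle⟩ := hK.ultrafilter_le_nhds (Ultrafilter.map k₀ F) hk0P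
  have hkst : Filter.Tendsto k₀ (F : Filter ℕ) (nhds kst) := by
    rwa [Ultrafilter.coe_map] at hkstle
  -- φ kst = 1
  have hΦk0 : ∀ n, Φ n (k₀ n) = 1 := fun n => phi_k0 (π n) (v n) (k₀ n) (hcpos n)
  have hkinv : ∀ x ∈ K, x⁻¹ ∈ K := by
    intro x hx; rw [← hKsymm]; exact Set.inv_mem_inv.mpr hx
  have hkey : ∀ ε > (0:ℝ), ‖φ kst - 1‖ ≤ ε := by
    intro ε hε
    obtain ⟨m, hm⟩ := exists_nat_one_div_lt (show (0:ℝ) < ε/2 by linarith)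
    have hU : (⋂ j ∈ Finset.range (m+2), (fun g : G => g ^ j) ⁻¹' K) ∈ nhds (1:G) := by
      refine (Filter.biInter_finset_mem _).mpr (fun j _ => ?_)
      apply ((continuous_pow j).continuousAt (x := (1:G))).preimage_mem_nhds
      rw [one_pow]; exact hKnhds
    have hg1 : Filter.Tendsto (fun n => kst * (k₀ n)⁻¹) (F:Filter ℕ) (nhds (1:G)) := by
      have := Filter.Tendsto.const_mul kst hkst.inv
      rwa [mul_inv_cancel] at this
    have hgU : ∀ᶠ n in (F:Filter ℕ), ∀ j ≤ m+1, (kst * (k₀ n)⁻¹)^j ∈ K := by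
      filter_upwards [hg1.eventually (Filter.eventually_of_mem hU (fun x hx => hx))] with n hn
      intro j hj
      have := Set.mem_iInter₂.mp hn j (Finset.mem_range.mpr (by omega))
      exact this
    have hεα : ∀ᶠ n : ℕ in (F:Filter ℕ), 3 * (1/((n:ℝ)+1)) < ε/2 := by
      have h3 : Filter.Tendsto (fun n : ℕ => 3 * (1/((n:ℝ)+1))) (F:Filter ℕ) (nhds 0) := by
        simpa using hα.const_mul (3:ℝ)
      exact h3.eventually_lt_const (by linarith)
    have keyn : ∀ n, (∀ j ≤ m+1, (kst * (k₀ n)⁻¹)^j ∈ K) →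
        ‖Φ n kst - 1‖ ≤ 1/((m:ℝ)+1) + 3 * (1/((n:ℝ)+1)) := by
      intro n hgK
      set g := kst * (k₀ n)⁻¹ with hgdef
      have claim : ∀ j, j ≤ m+1 → ‖(j:ℂ) * Φ n g - Φ n (g^j)‖ ≤ (j:ℝ) * (1/((n:ℝ)+1)) := by
        intro j
        induction j with
        | zero =>
          intro _
          have h0 : Φ n (1:G) = 0 := phi_one (π n) (v n) (k₀ n)
          rw [pow_zero, h0]
          simp
        | succ j ih =>
          intro hj
          have hj' : j ≤ m+1 := by omega
          have h1 := ih hj'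
          have hgj : g^j ∈ K := hgK j hj'
          have hgK1 : g ∈ K := by have := hgK 1 (by omega); rwa [pow_one] at this
          have hd := phi_defect' (π n) (v n) (k₀ n) (hcpos n) K (hmax n) _
            (show (0:ℝ) ≤ 1/((n:ℝ)+1) by positivity) (hsmall' n) (g^j) g
            [(g^j)⁻¹] [g]
            (by intro x hx; rw [List.mem_singleton] at hx; rw [hx]; exact hkinv _ hgj)
            (by intro x hx; rw [List.mem_singleton] at hx; rw [hx]; exact hgK1)
            (by simp) (by simp)
          simp only [List.length_singleton, Nat.cast_one, one_mul, mul_one] at hd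
          have heq : ((j:ℂ)+1) * Φ n g - Φ n (g^(j+1)) =
              ((j:ℂ) * Φ n g - Φ n (g^j)) - (Φ n (g^j * g) - Φ n (g^j) - Φ n g) := by
            rw [pow_succ]; ring
          have hcast : ((j+1:ℕ):ℂ) = (j:ℂ)+1 := by push_cast; ring
          have hcast' : ((j+1:ℕ):ℝ) = (j:ℝ)+1 := by push_cast; ring
          rw [hcast, hcast', heq]
          calc ‖((j:ℂ) * Φ n g - Φ n (g^j)) - (Φ n (g^j * g) - Φ n (g^j) - Φ n g)‖
              ≤ ‖(j:ℂ) * Φ n g - Φ n (g^j)‖ + ‖Φ n (g^j * g) - Φ n (g^j) - Φ n g‖ :=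
                norm_sub_le _ _
            _ ≤ (j:ℝ) * (1/((n:ℝ)+1)) + 1/((n:ℝ)+1) := by gcongr
            _ = ((j:ℝ)+1) * (1/((n:ℝ)+1)) := by ring
      have hM := claim (m+1) le_rfl
      have hgM : ‖Φ n (g^(m+1))‖ ≤ 1 := hΦK n _ (hgK (m+1) le_rfl)
      have hgb : ‖Φ n g‖ ≤ 1/((m:ℝ)+1) + 1/((n:ℝ)+1) := by
        have h4 : ‖((m+1:ℕ):ℂ) * Φ n g‖ ≤ ((m+1:ℕ):ℝ) * (1/((n:ℝ)+1)) + 1 := by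
          have h5 := norm_add_le (((m+1:ℕ):ℂ) * Φ n g - Φ n (g^(m+1))) (Φ n (g^(m+1)))
          rw [sub_add_cancel] at h5
          calc ‖((m+1:ℕ):ℂ) * Φ n g‖
              ≤ ‖((m+1:ℕ):ℂ) * Φ n g - Φ n (g^(m+1))‖ + ‖Φ n (g^(m+1))‖ := h5
            _ ≤ ((m+1:ℕ):ℝ) * (1/((n:ℝ)+1)) + 1 := by gcongr
        rw [norm_mul, Complex.norm_natCast] at h4
        have hMpos : (0:ℝ) < (m:ℝ)+1 := by positivity
        have hcast : ((m+1:ℕ):ℝ) = (m:ℝ)+1 := by push_cast; ring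
        rw [hcast] at h4
        have hnn : (0:ℝ) ≤ 1/((n:ℝ)+1) := by positivity
        have e1 : ((m:ℝ)+1) * (1/((m:ℝ)+1)) = 1 := by field_simp
        nlinarith [norm_nonneg (Φ n g)]
      have hkstinv : kst⁻¹ ∈ K := hkinv _ hkstK
      have hd2 := phi_defect' (π n) (v n) (k₀ n) (hcpos n) K (hmax n) _
        (show (0:ℝ) ≤ 1/((n:ℝ)+1) by positivity) (hsmall' n) g (k₀ n)
        [k₀ n, kst⁻¹] [k₀ n]
        (by intro x hx; simp only [List.mem_cons, List.mem_singleton,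
              List.not_mem_nil, or_false] at hx
            rcases hx with h | h
            · rw [h]; exact hk₀K n
            · rw [h]; exact hkstinv)
        (by intro x hx; rw [List.mem_singleton] at hx; rw [hx]; exact hk₀K n)
        (by rw [hgdef]; simp [mul_inv_rev])
        (by simp)
      have hgk : g * k₀ n = kst := by rw [hgdef]; exact inv_mul_cancel_right kst (k₀ n)
      rw [hgk] at hd2
      have hk0eq : phi (π n) (v n) (k₀ n) (k₀ n) = 1 := phi_k0 (π n) (v n) (k₀ n) (hcpos n)
      rw [hk0eq] at hd2
      have hlen : (([k₀ n, kst⁻¹].length : ℕ):ℝ) * (1/((n:ℝ)+1)) * (([k₀ n].length : ℕ):ℝ)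
          = 2 * (1/((n:ℝ)+1)) := by norm_num
      rw [hlen] at hd2
      have hd2' : ‖Φ n kst - 1 - Φ n g‖ ≤ 2 * (1/((n:ℝ)+1)) := by
        have heq2 : Φ n kst - 1 - Φ n g = Φ n kst - Φ n g - 1 := by ring
        rw [heq2]
        exact hd2
      have hsplit : Φ n kst - 1 = (Φ n kst - 1 - Φ n g) + Φ n g := by ring
      calc ‖Φ n kst - 1‖ = ‖(Φ n kst - 1 - Φ n g) + Φ n g‖ := by rw [← hsplit]
        _ ≤ ‖Φ n kst - 1 - Φ n g‖ + ‖Φ n g‖ := norm_add_le _ _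
        _ ≤ 2*(1/((n:ℝ)+1)) + (1/((m:ℝ)+1) + 1/((n:ℝ)+1)) := by gcongr
        _ = 1/((m:ℝ)+1) + 3*(1/((n:ℝ)+1)) := by ring
    have hev : ∀ᶠ n in (F:Filter ℕ), ‖Φ n kst - 1‖ ≤ ε := by
      filter_upwards [hgU, hεα] with n h1 h2
      have h3 := keyn n h1
      linarith
    have htd : Filter.Tendsto (fun n => ‖Φ n kst - 1‖) (F:Filter ℕ)
        (nhds ‖φ kst - 1‖) := ((hφ kst).sub tendsto_const_nhds).norm
    exact le_of_tendsto htd hev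
  have h1 : ‖φ kst - 1‖ ≤ 0 := by
    apply le_of_forall_pos_le_add
    intro ε hε
    simpa using hkey ε hε
  have h2 : φ kst = 1 := by
    have := le_antisymm h1 (norm_nonneg _)
    rwa [norm_eq_zero, sub_eq_zero] at this
  rw [hzero] at h2
  simp at h2
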